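/- Let n ≥ 1, let η = (η_{pq}) be an invertible skew-symmetric n×n complex matrix, let U ⊆ ℂ^{2n} be open with coordinates (z₁,…,z_n,θ₁,…,θ_n), and let W₁,…,W_n : U → ℂ be holomorphic. Define vector fields on U by v_i = ∂/∂θ_i and h_i = ∂/∂z_i + Σ_{p,q} η_{pq}·(∂W_i/∂θ_p)·∂/∂θ_q. Then [h_i + ε⁻¹v_i, h_j + ε⁻¹v_j] = 0 on U for all i, j and all ε ∈ ℂ∖{0} if and only if for all i, j, k: (∂/∂θ_k)(∂W_i/∂θ_j − ∂W_j/∂θ_i) = 0 and (∂/∂θ_k)(∂W_i/∂z_j − ∂W_j/∂z_i − Σ_{p,q} η_{pq}·(∂W_i/∂θ_p)·(∂W_j/∂θ_q)) = 0 on U. -/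

import Mathlib

/-- The Lie bracket of vector fields on an open subset of a complex normed space:
`[X,Y](x) = DY(x)(X(x)) − DX(x)(Y(x))`. -/
noncomputable def vecBracket {E : Type*} [NormedAddCommGroup E] [NormedSpace ℂ E]
    (X Y : E → E) (x : E) : E :=
  fderiv ℂ Y x (X x) - fderiv ℂ X x (Y x)

/-- Partial derivative `∂f/∂z_j` on `ℂ^{2n}` with coordinates `(z, θ)`. -/
noncomputable def dz {n : ℕ} (f : (Fin n → ℂ) × (Fin n → ℂ) → ℂ) (j : Fin n)
    (x : (Fin n → ℂ) × (Fin n → ℂ)) : ℂ :=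
  fderiv ℂ f x (Pi.single j 1, 0)

/-- Partial derivative `∂f/∂θ_j` on `ℂ^{2n}` with coordinates `(z, θ)`. -/
noncomputable def dθ {n : ℕ} (f : (Fin n → ℂ) × (Fin n → ℂ) → ℂ) (j : Fin n)
    (x : (Fin n → ℂ) × (Fin n → ℂ)) : ℂ :=
  fderiv ℂ f x (0, Pi.single j 1)


open Metric Set MeasureTheory Complex

section Aux
variable {E : Type*} [NormedAddCommGroup E] [NormedSpace ℂ E]


variable {E : Type*} [NormedAddCommGroup E] [NormedSpace ℂ E]

lemma hasDerivAt_line {f : E → ℂ} {x u : E} (hf : DifferentiableAt ℂ f x) :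
    HasDerivAt (fun ζ : ℂ => f (x + ζ • u)) (fderiv ℂ f x u) 0 := by
  have h1 : HasDerivAt (fun ζ : ℂ => x + ζ • u) u 0 := by
    simpa using ((hasDerivAt_id (0 : ℂ)).smul_const u).const_add x
  have hf' : HasFDerivAt f (fderiv ℂ f x) (x + (0:ℂ) • u) := by simpa using hf.hasFDerivAt
  have h2 := hf'.comp_hasDerivAt (x := 0) h1
  exact h2

lemma norm_fderiv_le_of_closedBall {f : E → ℂ} {U : Set E} (hU : IsOpen U)
    (hf : DifferentiableOn ℂ f U) {y : E} {δ M : ℝ} (hδ : 0 < δ)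
    (hsub : closedBall y δ ⊆ U) (hM : ∀ z ∈ closedBall y δ, ‖f z‖ ≤ M) :
    ‖fderiv ℂ f y‖ ≤ M / δ := by
  have hyU : y ∈ U := hsub (mem_closedBall_self hδ.le)
  have hM0 : 0 ≤ M := le_trans (norm_nonneg _) (hM y (mem_closedBall_self hδ.le))
  refine ContinuousLinearMap.opNorm_le_bound _ (div_nonneg hM0 hδ.le) fun v => ?_
  rcases eq_or_ne v 0 with rfl | hv
  · simp
  · set e : E := ‖v‖⁻¹ • v with he
    have hev : (‖v‖ : ℝ) • e = v := by
      rw [he, smul_smul, mul_inv_cancel₀ (norm_ne_zero_iff.2 hv), one_smul]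
    have hne : ‖e‖ = 1 := by
      rw [he, norm_smul, norm_inv, norm_norm, inv_mul_cancel₀ (norm_ne_zero_iff.2 hv)]
    set g : ℂ → ℂ := fun ζ => f (y + ζ • e) with hg
    have hmem : ∀ ζ : ℂ, ‖ζ‖ ≤ δ → y + ζ • e ∈ U := by
      intro ζ hζ
      apply hsub
      simp only [mem_closedBall, dist_eq_norm, add_sub_cancel_left]
      rw [norm_smul, hne, mul_one]
      exact hζ
    have hgd : DifferentiableOn ℂ g (closure (ball (0:ℂ) δ)) := by
      intro ζ hζ
      have hζ' : ‖ζ‖ ≤ δ := by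
        have := closure_ball_subset_closedBall hζ
        simpa [mem_closedBall, dist_eq_norm] using this
      exact (((hf.differentiableAt (hU.mem_nhds (hmem ζ hζ'))).comp ζ
        (by exact (differentiableAt_id.smul_const e).const_add y))).differentiableWithinAt
    have hbd : ∀ z ∈ sphere (0:ℂ) δ, ‖g z‖ ≤ M := by
      intro z hz
      apply hM
      simp only [mem_sphere_iff_norm, sub_zero] at hz
      simp only [mem_closedBall, dist_eq_norm, add_sub_cancel_left]
      rw [norm_smul, hne, mul_one, hz]
    have key := Complex.norm_deriv_le_of_forall_mem_sphere_norm_le hδ hgd.diffContOnCl hbd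
    have hder : deriv g 0 = fderiv ℂ f y e :=
      (hasDerivAt_line (hf.differentiableAt (hU.mem_nhds hyU))).deriv
    rw [hder] at key
    calc ‖fderiv ℂ f y v‖ = ‖v‖ * ‖fderiv ℂ f y e‖ := by
          conv_lhs => rw [← hev]
          rw [(fderiv ℂ f y).map_smul_of_tower, norm_smul, norm_norm]
      _ ≤ ‖v‖ * (M / δ) := by
          exact mul_le_mul_of_nonneg_left key (norm_nonneg v)
      _ = M / δ * ‖v‖ := mul_comm _ _

lemma differentiableAt_fderiv_apply
    [FiniteDimensional ℂ E] [MeasurableSpace E] [BorelSpace E]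
    {f : E → ℂ} {U : Set E} (hU : IsOpen U) (hf : DifferentiableOn ℂ f U)
    (u : E) {x₀ : E} (hx₀ : x₀ ∈ U) :
    DifferentiableAt ℂ (fun x => fderiv ℂ f x u) x₀ := by
  haveI : ProperSpace E := FiniteDimensional.proper ℂ E
  borelize (E →L[ℂ] ℂ)
  obtain ⟨r, hr0, hrU⟩ := Metric.isOpen_iff.1 hU x₀ hx₀
  set δ : ℝ := r / 3 with hδdef
  have hδ : 0 < δ := by positivity
  have hsub : closedBall x₀ (2 * δ) ⊆ U := by
    intro z hz
    apply hrU
    have : dist z x₀ ≤ 2 * δ := hz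
    have h23 : 2 * δ < r := by rw [hδdef]; linarith
    exact lt_of_le_of_lt this h23
  obtain ⟨M, hM⟩ := (isCompact_closedBall x₀ (2*δ)).exists_bound_of_continuousOn
      (hf.continuousOn.mono hsub)
  have hM0 : 0 ≤ M :=
    le_trans (norm_nonneg _) (hM x₀ (mem_closedBall_self (by positivity)))
  set ρ : ℝ := δ / (2 * (‖u‖ + 1)) with hρdef
  have hρ : 0 < ρ := by positivity
  have hρu : ρ * ‖u‖ ≤ δ / 2 := by
    rw [hρdef]
    rw [div_mul_eq_mul_div, div_le_div_iff₀ (by positivity) (by norm_num)]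
    have h1 : ‖u‖ ≤ ‖u‖ + 1 := by linarith
    nlinarith [norm_nonneg u, hδ.le]
  -- geometry
  have hgeom : ∀ x ∈ ball x₀ (δ/2), ∀ ζ : ℂ, ‖ζ‖ ≤ ρ → x + ζ • u ∈ closedBall x₀ δ := by
    intro x hx ζ hζ
    have h1 : ‖x - x₀‖ < δ / 2 := by simpa [dist_eq_norm] using hx
    have h2 : ‖ζ • u‖ ≤ δ / 2 := by
      rw [norm_smul]
      calc ‖ζ‖ * ‖u‖ ≤ ρ * ‖u‖ := mul_le_mul_of_nonneg_right hζ (norm_nonneg u)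
        _ ≤ δ / 2 := hρu
    simp only [mem_closedBall, dist_eq_norm]
    calc ‖x + ζ • u - x₀‖ = ‖(x - x₀) + ζ • u‖ := by rw [add_sub_right_comm]
      _ ≤ ‖x - x₀‖ + ‖ζ • u‖ := norm_add_le _ _
      _ ≤ δ := by linarith
  have hδsub : closedBall x₀ δ ⊆ U := by
    intro z hz; exact hsub (closedBall_subset_closedBall (by linarith) hz)
  set w : ℝ → ℂ := fun θ => deriv (circleMap 0 ρ) θ * (circleMap 0 ρ θ) ^ (-2 : ℤ) with hw
  set F : E → ℝ → ℂ := fun x θ => w θ • f (x + circleMap 0 ρ θ • u) with hF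
  set F' : E → ℝ → E →L[ℂ] ℂ := fun x θ => w θ • fderiv ℂ f (x + circleMap 0 ρ θ • u) with hF'
  have hwc : Continuous w := by
    have h1 : Continuous fun θ => deriv (circleMap 0 ρ) θ := by
      simp only [deriv_circleMap]
      exact (continuous_circleMap 0 ρ).mul continuous_const
    exact h1.mul ((continuous_circleMap 0 ρ).zpow₀ _
      (fun θ => Or.inl (circleMap_ne_center hρ.ne')))
  -- representation
  have hrep : ∀ x ∈ ball x₀ (δ/2),
      fderiv ℂ f x u = (2 * Real.pi * I)⁻¹ • ∫ θ in (0:ℝ)..2 * Real.pi, F x θ := by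
    intro x hx
    set g : ℂ → ℂ := fun ζ => f (x + ζ • u) with hg
    have hgd : DiffContOnCl ℂ g (ball (0:ℂ) ρ) := by
      apply DifferentiableOn.diffContOnCl
      intro ζ hζ
      have hζ' : ‖ζ‖ ≤ ρ := by
        have := closure_ball_subset_closedBall hζ
        simpa [mem_closedBall, dist_eq_norm] using this
      have : x + ζ • u ∈ U := hδsub (hgeom x hx ζ hζ')
      exact (((hf.differentiableAt (hU.mem_nhds this)).comp ζ
        (by exact (differentiableAt_id.smul_const u).const_add x))).differentiableWithinAt
    have h1 : deriv g 0 = (2 * Real.pi * I)⁻¹ • ∮ z in C(0, ρ), (z - 0) ^ (-2 : ℤ) • g z := by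
      have h := hgd.deriv_eq_smul_circleIntegral hρ
      have e : (∮ z in C(0, ρ), (z - 0) ^ (-2 : ℤ) • g z)
          = ∮ z in C(0, ρ), (1 / (z - 0) ^ 2) • g z := by
        simp [zpow_neg, one_div]
      rw [e, h, inv_smul_smul₀ (by simp [Real.pi_ne_zero, I_ne_zero])]
    have h2 : deriv g 0 = fderiv ℂ f x u := by
      have hxU : x ∈ U := by
        have h0 := hgeom x hx 0 (by simp [hρ.le])
        simp only [zero_smul, add_zero] at h0
        exact hδsub h0
      exact (hasDerivAt_line (hf.differentiableAt (hU.mem_nhds hxU))).deriv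
    rw [h2] at h1
    rw [h1]
    congr 1
    rw [circleIntegral]
    apply intervalIntegral.integral_congr
    intro θ _
    simp only [hF, hw, sub_zero, smul_eq_mul]
    ring
  -- the parametric integral
  have hmain : HasFDerivAt (fun x => ∫ θ in (0:ℝ)..2 * Real.pi, F x θ)
      (∫ θ in (0:ℝ)..2 * Real.pi, F' x₀ θ) x₀ := by
    apply intervalIntegral.hasFDerivAt_integral_of_dominated_of_fderiv_le
      (s := ball x₀ (δ/2)) (bound := fun _ => ρ⁻¹ * (M / δ))
      (ball_mem_nhds x₀ (by positivity))
    · filter_upwards [ball_mem_nhds x₀ (by positivity : (0:ℝ) < δ/2)] with x hx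
      apply Continuous.aestronglyMeasurable
      apply hwc.smul
      apply (hf.continuousOn.mono hδsub).comp_continuous
        (by exact continuous_const.add ((continuous_circleMap 0 ρ).smul continuous_const))
      intro θ
      exact hgeom x hx _ (by simp [norm_circleMap_zero, abs_of_pos hρ, hρ.le])
    · apply Continuous.intervalIntegrable
      apply hwc.smul
      apply (hf.continuousOn.mono hδsub).comp_continuous
        (by exact continuous_const.add ((continuous_circleMap 0 ρ).smul continuous_const))
      intro θ
      exact hgeom x₀ (mem_ball_self (by positivity)) _
        (by simp [norm_circleMap_zero, abs_of_pos hρ, hρ.le])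
    · apply Measurable.aestronglyMeasurable
      apply Measurable.smul hwc.measurable
      exact (measurable_fderiv ℂ f).comp
        (by exact (continuous_const.add ((continuous_circleMap 0 ρ).smul continuous_const)).measurable)
    · apply Filter.Eventually.of_forall
      intro θ _ x hx
      have hmem : x + circleMap 0 ρ θ • u ∈ closedBall x₀ δ :=
        hgeom x hx _ (by simp [norm_circleMap_zero, abs_of_pos hρ, hρ.le])
      have hsub2 : closedBall (x + circleMap 0 ρ θ • u) δ ⊆ closedBall x₀ (2*δ) := by
        apply closedBall_subset_closedBall'
        have : dist (x + circleMap 0 ρ θ • u) x₀ ≤ δ := hmem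
        linarith
      have hbd := norm_fderiv_le_of_closedBall hU hf hδ (hsub2.trans hsub)
        (fun z hz => hM z (hsub2 hz))
      have hwnorm : ‖w θ‖ = ρ⁻¹ := by
        simp only [hw]
        rw [norm_mul, deriv_circleMap, norm_mul, norm_zpow]
        simp only [norm_circleMap_zero, Complex.norm_I, abs_of_pos hρ]
        rw [mul_one]
        have hρ' : ρ ≠ 0 := hρ.ne'
        rw [zpow_neg, zpow_two]
        field_simp
      calc ‖F' x θ‖ = ‖w θ‖ * ‖fderiv ℂ f (x + circleMap 0 ρ θ • u)‖ := by
            simp only [hF']; exact norm_smul (w θ) (fderiv ℂ f (x + circleMap 0 ρ θ • u))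
        _ ≤ ρ⁻¹ * (M / δ) := by
            rw [hwnorm]
            exact mul_le_mul_of_nonneg_left hbd (by positivity)
    · exact intervalIntegrable_const
    · apply Filter.Eventually.of_forall
      intro θ _ x hx
      have hmem : x + circleMap 0 ρ θ • u ∈ U :=
        hδsub (hgeom x hx _ (by simp [norm_circleMap_zero, abs_of_pos hρ, hρ.le]))
      have h1 : HasFDerivAt (fun y : E => y + circleMap 0 ρ θ • u)
          (ContinuousLinearMap.id ℂ E) x := by
        simpa using (hasFDerivAt_id x).add_const (circleMap 0 ρ θ • u)
      have h2 := ((hf.differentiableAt (hU.mem_nhds hmem)).hasFDerivAt.comp x h1).fun_const_smul (w θ)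
      exact h2
  -- conclude
  have heq : (fun x => fderiv ℂ f x u)
      =ᶠ[nhds x₀] fun x => (2 * Real.pi * I)⁻¹ • ∫ θ in (0:ℝ)..2 * Real.pi, F x θ := by
    filter_upwards [ball_mem_nhds x₀ (by positivity : (0:ℝ) < δ/2)] with x hx
    exact hrep x hx
  rw [Filter.EventuallyEq.differentiableAt_iff heq]
  exact (hmain.differentiableAt).const_smul ((2 * Real.pi * I)⁻¹ : ℂ)


lemma differentiableAt_fderiv [FiniteDimensional ℂ E] [MeasurableSpace E] [BorelSpace E]
    {f : E → ℂ} {U : Set E} (hU : IsOpen U) (hf : DifferentiableOn ℂ f U)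
    {x₀ : E} (hx₀ : x₀ ∈ U) : DifferentiableAt ℂ (fderiv ℂ f) x₀ := by
  set b := Module.finBasis ℂ E with hb
  have hrepr : (fderiv ℂ f) = fun x =>
      ∑ i, (fderiv ℂ f x (b i)) • (LinearMap.toContinuousLinearMap (b.coord i)) := by
    funext x
    ext v
    simp only [ContinuousLinearMap.coe_sum', Finset.sum_apply, ContinuousLinearMap.coe_smul',
      Pi.smul_apply, LinearMap.coe_toContinuousLinearMap', Module.Basis.coord_apply, smul_eq_mul]
    conv_lhs => rw [← b.sum_repr v]
    rw [map_sum]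
    simp only [_root_.map_smul, smul_eq_mul]
    exact Finset.sum_congr rfl fun i _ => mul_comm _ _
  rw [hrepr]
  apply DifferentiableAt.fun_sum
  intro i _
  exact (differentiableAt_fderiv_apply hU hf (b i) hx₀).smul_const _

lemma schwarz_fderiv [FiniteDimensional ℂ E] [MeasurableSpace E] [BorelSpace E]
    {f : E → ℂ} {U : Set E} (hU : IsOpen U) (hf : DifferentiableOn ℂ f U)
    {x : E} (hx : x ∈ U) (v w : E) :
    fderiv ℂ (fun y => fderiv ℂ f y w) x v = fderiv ℂ (fun y => fderiv ℂ f y v) x w := by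
  have hf'' := (differentiableAt_fderiv hU hf hx).hasFDerivAt
  have hev : ∀ᶠ y in nhds x, HasFDerivAt f (fderiv ℂ f y) y := by
    filter_upwards [hU.mem_nhds hx] with y hy
    exact (hf.differentiableAt (hU.mem_nhds hy)).hasFDerivAt
  have hsymm := second_derivative_symmetric_of_eventually hev hf'' v w
  have h1 : ∀ u' : E, HasFDerivAt (fun y => fderiv ℂ f y u')
      (((ContinuousLinearMap.apply ℂ ℂ u')).comp (fderiv ℂ (fderiv ℂ f) x)) x := fun u' =>
    ((ContinuousLinearMap.apply ℂ ℂ u').hasFDerivAt.comp x hf'')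
  rw [(h1 w).fderiv, (h1 v).fderiv]
  simpa using hsymm

end Aux

private lemma expandCLM {n : ℕ} (L : ((Fin n → ℂ) × (Fin n → ℂ)) →L[ℂ] ℂ) (c : ℂ)
    (g : Fin n → ℂ) (i : Fin n) :
    L (Pi.single i 1, g + c • (Pi.single i 1 : Fin n → ℂ))
      = L (Pi.single i 1, 0) + ((∑ s, g s * L (0, Pi.single s 1)) + c * L (0, Pi.single i 1)) := by
  have hgs : ∀ g' : Fin n → ℂ, g' = ∑ s : Fin n, g' s • (Pi.single s 1 : Fin n → ℂ) := by
    intro g'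
    funext q
    rw [Finset.sum_apply]
    simp [Pi.single_apply, mul_ite, Finset.sum_ite_eq]
  have hL0 : ∀ g' : Fin n → ℂ, L ((0 : Fin n → ℂ), g') = ∑ s, g' s * L (0, Pi.single s 1) := by
    intro g'
    have hdec : ((0 : Fin n → ℂ), g') = ∑ s : Fin n, (g' s) • (((0 : Fin n → ℂ), Pi.single s 1) : (Fin n → ℂ) × (Fin n → ℂ)) := by
      refine Prod.ext (by simp [Prod.fst_sum]) ?_
      simp only [Prod.snd_sum, Prod.smul_mk]
      exact (hgs g').trans (by simp)
    rw [hdec, map_sum]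
    refine Finset.sum_congr rfl fun s _ => ?_
    rw [_root_.map_smul, smul_eq_mul]
  have hdecomp : ((Pi.single i 1, g + c • (Pi.single i 1 : Fin n → ℂ))
        : (Fin n → ℂ) × (Fin n → ℂ))
      = (Pi.single i 1, (0 : Fin n → ℂ)) + ((0 : Fin n → ℂ), g)
        + c • (((0 : Fin n → ℂ), Pi.single i 1) : (Fin n → ℂ) × (Fin n → ℂ)) := by
    refine Prod.ext (by simp) ?_
    simp [add_comm]
  rw [hdecomp, map_add, map_add, _root_.map_smul, smul_eq_mul, hL0, add_assoc]

private lemma eta_cancel {n : ℕ} {η : Matrix (Fin n) (Fin n) ℂ} (hη : IsUnit η) (c : Fin n → ℂ)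
    (h : ∀ q, ∑ p, η p q * c p = 0) : ∀ p, c p = 0 := by
  haveI := hη.invertible
  have hv : Matrix.vecMul c η = 0 := by
    funext q
    simp only [Pi.zero_apply]
    rw [Matrix.vecMul, dotProduct]
    rw [← h q]
    exact Finset.sum_congr rfl fun p _ => mul_comm _ _
  have : c = Matrix.vecMul (Matrix.vecMul c η) (⅟η) := by
    rw [Matrix.vecMul_vecMul, mul_invOf_self, Matrix.vecMul_one]
  rw [hv] at this
  simp only [Matrix.zero_vecMul] at this
  intro p
  rw [this]
  simp

private lemma eps_split {a b : ℂ} (h : ∀ ε : ℂ, ε ≠ 0 → a + ε⁻¹ * b = 0) : a = 0 ∧ b = 0 := by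
  have h1 := h 1 one_ne_zero
  have h2 := h 2 two_ne_zero
  norm_num at h1 h2
  constructor
  · linear_combination 2 * h2 - h1
  · linear_combination 2 * h1 - 2 * h2


private lemma bracket_formula {n : ℕ} (η : Matrix (Fin n) (Fin n) ℂ)
    {U : Set ((Fin n → ℂ) × (Fin n → ℂ))}
    (W : Fin n → (Fin n → ℂ) × (Fin n → ℂ) → ℂ)
    (v h : Fin n → ((Fin n → ℂ) × (Fin n → ℂ)) → (Fin n → ℂ) × (Fin n → ℂ))
    (hv : ∀ i x, v i x = (0, Pi.single i 1))
    (hh : ∀ i x, h i x = (Pi.single i 1, fun q => ∑ p, η p q * dθ (W i) p x))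
    (hd : ∀ i p x, x ∈ U → DifferentiableAt ℂ (dθ (W i) p) x)
    (ε : ℂ) (i j : Fin n) {x : (Fin n → ℂ) × (Fin n → ℂ)} (hx : x ∈ U) :
    vecBracket (fun y => h i y + ε⁻¹ • v i y) (fun y => h j y + ε⁻¹ • v j y) x =
      (0, fun q => ∑ p, η p q *
        ((dz (dθ (W j) p) i x - dz (dθ (W i) p) j x
          + ∑ s, ((∑ r, η r s * dθ (W i) r x) * dθ (dθ (W j) p) s x
                - (∑ r, η r s * dθ (W j) r x) * dθ (dθ (W i) p) s x))
         + ε⁻¹ * (dθ (dθ (W j) p) i x - dθ (dθ (W i) p) j x))) := by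
  have hA : ∀ k : Fin n, (fun y => h k y + ε⁻¹ • v k y)
      = fun y => ((Pi.single k 1 : Fin n → ℂ),
          (fun q => ∑ p, η p q * dθ (W k) p y) + ε⁻¹ • (Pi.single k 1 : Fin n → ℂ)) := by
    intro k
    funext y
    rw [hh, hv]
    simp [Prod.ext_iff]
  have hHas : ∀ k : Fin n, HasFDerivAt
      (fun y => ((Pi.single k 1 : Fin n → ℂ),
          (fun q => ∑ p, η p q * dθ (W k) p y) + ε⁻¹ • (Pi.single k 1 : Fin n → ℂ)))
      (ContinuousLinearMap.prod 0
        (ContinuousLinearMap.pi fun q => ∑ p, η p q • fderiv ℂ (dθ (W k) p) x)) x := by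
    intro k
    apply HasFDerivAt.prodMk
    · exact hasFDerivAt_const _ _
    · have hpi : HasFDerivAt (fun y (q : Fin n) => ∑ p, η p q * dθ (W k) p y)
          (ContinuousLinearMap.pi fun q => ∑ p, η p q • fderiv ℂ (dθ (W k) p) x) x := by
        apply hasFDerivAt_pi.2
        intro q
        exact HasFDerivAt.fun_sum fun p _ => ((hd k p x hx).hasFDerivAt.const_mul (η p q))
      exact hpi.add_const _
  rw [hA i, hA j]
  rw [vecBracket]
  rw [(hHas j).fderiv, (hHas i).fderiv]
  simp only [ContinuousLinearMap.prod_apply, ContinuousLinearMap.pi_apply,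
    ContinuousLinearMap.zero_apply, Prod.mk_sub_mk]
  refine Prod.ext (by simp) ?_
  simp only
  funext q
  simp only [Pi.sub_apply]
  rw [ContinuousLinearMap.pi_apply, ContinuousLinearMap.pi_apply]
  simp only [ContinuousLinearMap.sum_apply, ContinuousLinearMap.smul_apply, smul_eq_mul]
  rw [← Finset.sum_sub_distrib]
  refine Finset.sum_congr rfl fun p _ => ?_
  rw [expandCLM (fderiv ℂ (dθ (W j) p) x) ε⁻¹ _ i,
      expandCLM (fderiv ℂ (dθ (W i) p) x) ε⁻¹ _ j]
  simp only [dz, dθ, Finset.sum_sub_distrib]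
  ring


private lemma identR1 {n : ℕ} (W : Fin n → (Fin n → ℂ) × (Fin n → ℂ) → ℂ)
    {U : Set ((Fin n → ℂ) × (Fin n → ℂ))}
    (hdθ : ∀ i p x, x ∈ U → DifferentiableAt ℂ (dθ (W i) p) x)
    (hswθθ : ∀ i p k (x : (Fin n → ℂ) × (Fin n → ℂ)), x ∈ U →
      dθ (dθ (W i) p) k x = dθ (dθ (W i) k) p x)
    (i j k : Fin n) {x : (Fin n → ℂ) × (Fin n → ℂ)} (hx : x ∈ U) :
    dθ (fun y => dθ (W i) j y - dθ (W j) i y) k x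
      = -(dθ (dθ (W j) k) i x - dθ (dθ (W i) k) j x) := by
  have hfd : HasFDerivAt (fun y => dθ (W i) j y - dθ (W j) i y)
      (fderiv ℂ (dθ (W i) j) x - fderiv ℂ (dθ (W j) i) x) x :=
    (hdθ i j x hx).hasFDerivAt.sub (hdθ j i x hx).hasFDerivAt
  have h1 : dθ (fun y => dθ (W i) j y - dθ (W j) i y) k x
      = dθ (dθ (W i) j) k x - dθ (dθ (W j) i) k x := by
    rw [dθ, hfd.fderiv, ContinuousLinearMap.sub_apply]
    rfl
  rw [h1, hswθθ i j k x hx, hswθθ j i k x hx]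
  ring

private lemma identR2 {n : ℕ} (η : Matrix (Fin n) (Fin n) ℂ) (hskew : η.transpose = -η)
    (W : Fin n → (Fin n → ℂ) × (Fin n → ℂ) → ℂ)
    {U : Set ((Fin n → ℂ) × (Fin n → ℂ))}
    (hdθ : ∀ i p x, x ∈ U → DifferentiableAt ℂ (dθ (W i) p) x)
    (hdz : ∀ i p x, x ∈ U → DifferentiableAt ℂ (dz (W i) p) x)
    (hswθθ : ∀ i p k (x : (Fin n → ℂ) × (Fin n → ℂ)), x ∈ U →
      dθ (dθ (W i) p) k x = dθ (dθ (W i) k) p x)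
    (hswzθ : ∀ i p k (x : (Fin n → ℂ) × (Fin n → ℂ)), x ∈ U →
      dz (dθ (W i) p) k x = dθ (dz (W i) k) p x)
    (i j k : Fin n) {x : (Fin n → ℂ) × (Fin n → ℂ)} (hx : x ∈ U) :
    dθ (fun y => dz (W i) j y - dz (W j) i y
        - ∑ p, ∑ q, η p q * dθ (W i) p y * dθ (W j) q y) k x
      = -((dz (dθ (W j) k) i x - dz (dθ (W i) k) j x
          + ∑ s, ((∑ r, η r s * dθ (W i) r x) * dθ (dθ (W j) k) s x
                - (∑ r, η r s * dθ (W j) r x) * dθ (dθ (W i) k) s x))) := by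
  have hskew' : ∀ p q, η q p = -η p q := by
    intro p q
    have := congrFun (congrFun hskew p) q
    simpa [Matrix.transpose_apply] using this
  have hfd : HasFDerivAt
      (fun y => dz (W i) j y - dz (W j) i y
        - ∑ p, ∑ q, η p q * dθ (W i) p y * dθ (W j) q y)
      (fderiv ℂ (dz (W i) j) x - fderiv ℂ (dz (W j) i) x
        - ∑ p, ∑ q, ((η p q * dθ (W i) p x) • fderiv ℂ (dθ (W j) q) x
            + dθ (W j) q x • (η p q • fderiv ℂ (dθ (W i) p) x))) x := by
    exact ((hdz i j x hx).hasFDerivAt.sub (hdz j i x hx).hasFDerivAt).sub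
      (HasFDerivAt.fun_sum fun p _ => HasFDerivAt.fun_sum fun q _ =>
        ((hdθ i p x hx).hasFDerivAt.const_mul (η p q)).fun_mul (hdθ j q x hx).hasFDerivAt)
  have h1 : dθ (fun y => dz (W i) j y - dz (W j) i y
        - ∑ p, ∑ q, η p q * dθ (W i) p y * dθ (W j) q y) k x
      = dθ (dz (W i) j) k x - dθ (dz (W j) i) k x
        - ∑ p, ∑ q, ((η p q * dθ (W i) p x) * dθ (dθ (W j) q) k x
            + dθ (W j) q x * (η p q * dθ (dθ (W i) p) k x)) := by
    rw [dθ, hfd.fderiv]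
    simp only [ContinuousLinearMap.sub_apply, ContinuousLinearMap.sum_apply,
      ContinuousLinearMap.add_apply, ContinuousLinearMap.smul_apply, smul_eq_mul]
    rfl
  -- now pure algebra with sums
  have hsum : ∑ p, ∑ q, ((η p q * dθ (W i) p x) * dθ (dθ (W j) q) k x
            + dθ (W j) q x * (η p q * dθ (dθ (W i) p) k x))
      = (∑ s, ((∑ r, η r s * dθ (W i) r x) * dθ (dθ (W j) k) s x
                - (∑ r, η r s * dθ (W j) r x) * dθ (dθ (W i) k) s x)) := by
    have e1 : ∑ p, ∑ q, (η p q * dθ (W i) p x) * dθ (dθ (W j) q) k x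
        = ∑ s, (∑ r, η r s * dθ (W i) r x) * dθ (dθ (W j) k) s x := by
      rw [Finset.sum_comm]
      refine Finset.sum_congr rfl fun s _ => ?_
      rw [Finset.sum_mul]
      refine Finset.sum_congr rfl fun r _ => ?_
      rw [hswθθ j s k x hx]
    have e2 : ∑ p, ∑ q, dθ (W j) q x * (η p q * dθ (dθ (W i) p) k x)
        = ∑ s, -((∑ r, η r s * dθ (W j) r x) * dθ (dθ (W i) k) s x) := by
      refine Finset.sum_congr rfl fun p _ => ?_
      rw [hswθθ i p k x hx, Finset.sum_mul, ← Finset.sum_neg_distrib]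
      refine Finset.sum_congr rfl fun q _ => ?_
      rw [hskew' p q]
      ring
    have hsplit : (∑ p, ∑ q, ((η p q * dθ (W i) p x) * dθ (dθ (W j) q) k x
            + dθ (W j) q x * (η p q * dθ (dθ (W i) p) k x)))
        = (∑ p, ∑ q, (η p q * dθ (W i) p x) * dθ (dθ (W j) q) k x)
          + ∑ p, ∑ q, dθ (W j) q x * (η p q * dθ (dθ (W i) p) k x) := by
      rw [← Finset.sum_add_distrib]
      exact Finset.sum_congr rfl fun p _ => Finset.sum_add_distrib
    rw [hsplit, e1, e2]
    rw [Finset.sum_sub_distrib, Finset.sum_neg_distrib]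
    ring
  rw [h1, hsum, ← hswzθ j k i x hx, ← hswzθ i k j x hx]
  ring


/-- Flatness of the pencil of connections `h_ε = h + ε⁻¹v` of a pre-Joyce structure,
written in Darboux coordinates, is equivalent to the equations (2.3) of the paper:
the vector fields `h_i + ε⁻¹v_i` pairwise commute for all `ε ∈ ℂ∖{0}` iff the stated
θ-derivatives vanish. -/

theorem preJoyce_flatness_iff (n : ℕ) (hn : 1 ≤ n) (η : Matrix (Fin n) (Fin n) ℂ)
    (hη : IsUnit η) (hskew : η.transpose = -η)
    (U : Set ((Fin n → ℂ) × (Fin n → ℂ))) (hU : IsOpen U)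
    (W : Fin n → (Fin n → ℂ) × (Fin n → ℂ) → ℂ)
    (hW : ∀ i, DifferentiableOn ℂ (W i) U)
    (v h : Fin n → ((Fin n → ℂ) × (Fin n → ℂ)) → (Fin n → ℂ) × (Fin n → ℂ))
    (hv : ∀ i x, v i x = (0, Pi.single i 1))
    (hh : ∀ i x, h i x = (Pi.single i 1, fun q => ∑ p, η p q * dθ (W i) p x)) :
    (∀ ε : ℂ, ε ≠ 0 → ∀ i j, ∀ x ∈ U,
        vecBracket (fun y => h i y + ε⁻¹ • v i y) (fun y => h j y + ε⁻¹ • v j y) x = 0) ↔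
      (∀ i j k, ∀ x ∈ U,
        dθ (fun y => dθ (W i) j y - dθ (W j) i y) k x = 0 ∧
        dθ (fun y => dz (W i) j y - dz (W j) i y
            - ∑ p, ∑ q, η p q * dθ (W i) p y * dθ (W j) q y) k x = 0) := by
  have hdθ : ∀ i p (x : (Fin n → ℂ) × (Fin n → ℂ)), x ∈ U →
      DifferentiableAt ℂ (dθ (W i) p) x := fun i p x hx =>
    differentiableAt_fderiv_apply hU (hW i) (0, Pi.single p 1) hx
  have hdz : ∀ i p (x : (Fin n → ℂ) × (Fin n → ℂ)), x ∈ U →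
      DifferentiableAt ℂ (dz (W i) p) x := fun i p x hx =>
    differentiableAt_fderiv_apply hU (hW i) (Pi.single p 1, 0) hx
  have hswθθ : ∀ i p k (x : (Fin n → ℂ) × (Fin n → ℂ)), x ∈ U →
      dθ (dθ (W i) p) k x = dθ (dθ (W i) k) p x := fun i p k x hx =>
    schwarz_fderiv hU (hW i) hx (0, Pi.single k 1) (0, Pi.single p 1)
  have hswzθ : ∀ i p k (x : (Fin n → ℂ) × (Fin n → ℂ)), x ∈ U →
      dz (dθ (W i) p) k x = dθ (dz (W i) k) p x := fun i p k x hx =>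
    schwarz_fderiv hU (hW i) hx (Pi.single k 1, 0) (0, Pi.single p 1)
  constructor
  · intro hflat i j k x hx
    have key : ∀ p : Fin n,
        (dz (dθ (W j) p) i x - dz (dθ (W i) p) j x
          + ∑ s, ((∑ r, η r s * dθ (W i) r x) * dθ (dθ (W j) p) s x
                - (∑ r, η r s * dθ (W j) r x) * dθ (dθ (W i) p) s x)) = 0 ∧
        (dθ (dθ (W j) p) i x - dθ (dθ (W i) p) j x) = 0 := by
      have hq : ∀ ε : ℂ, ε ≠ 0 → ∀ q, (∑ p, η p q *
          ((dz (dθ (W j) p) i x - dz (dθ (W i) p) j x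
            + ∑ s, ((∑ r, η r s * dθ (W i) r x) * dθ (dθ (W j) p) s x
                  - (∑ r, η r s * dθ (W j) r x) * dθ (dθ (W i) p) s x))
           + ε⁻¹ * (dθ (dθ (W j) p) i x - dθ (dθ (W i) p) j x))) = 0 := by
        intro ε hε q
        have h0 := (bracket_formula η W v h hv hh hdθ ε i j hx).symm.trans
          (hflat ε hε i j x hx)
        have h2 := congrFun (congrArg Prod.snd h0) q
        simpa using h2
      have hsplitq : ∀ q : Fin n,
          (∑ p, η p q * (dz (dθ (W j) p) i x - dz (dθ (W i) p) j x
            + ∑ s, ((∑ r, η r s * dθ (W i) r x) * dθ (dθ (W j) p) s x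
                  - (∑ r, η r s * dθ (W j) r x) * dθ (dθ (W i) p) s x))) = 0 ∧
          (∑ p, η p q * (dθ (dθ (W j) p) i x - dθ (dθ (W i) p) j x)) = 0 := by
        intro q
        apply eps_split
        intro ε hε
        rw [Finset.mul_sum, ← Finset.sum_add_distrib]
        rw [← hq ε hε q]
        refine Finset.sum_congr rfl fun p _ => ?_
        ring
      have hE := eta_cancel hη _ (fun q => (hsplitq q).1)
      have hB := eta_cancel hη _ (fun q => (hsplitq q).2)
      exact fun p => ⟨hE p, hB p⟩
    constructor
    · rw [identR1 W hdθ hswθθ i j k hx, (key k).2, neg_zero]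
    · rw [identR2 η hskew W hdθ hdz hswθθ hswzθ i j k hx, (key k).1, neg_zero]
  · intro hR ε hε i j x hx
    rw [bracket_formula η W v h hv hh hdθ ε i j hx]
    have hB : ∀ p, dθ (dθ (W j) p) i x - dθ (dθ (W i) p) j x = 0 := by
      intro p
      have h1 := (hR i j p x hx).1
      rw [identR1 W hdθ hswθθ i j p hx] at h1
      exact neg_eq_zero.1 h1
    have hE : ∀ p, (dz (dθ (W j) p) i x - dz (dθ (W i) p) j x
          + ∑ s, ((∑ r, η r s * dθ (W i) r x) * dθ (dθ (W j) p) s x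
                - (∑ r, η r s * dθ (W j) r x) * dθ (dθ (W i) p) s x)) = 0 := by
      intro p
      have h1 := (hR i j p x hx).2
      rw [identR2 η hskew W hdθ hdz hswθθ hswzθ i j p hx] at h1
      exact neg_eq_zero.1 h1
    refine Prod.ext rfl ?_
    funext q
    simp only [Pi.zero_apply]
    refine Finset.sum_eq_zero fun p _ => ?_
    rw [hE p, hB p]
    ring
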